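/- Let X be a pre-Riesz space and consider the set of all band projections on X, partially ordered by the usual order of positive operators (P ≤ Q iff Q − P is positive). For any two band projections P and Q on X: the composition PQ is the infimum of {P, Q} within the set of band projections, and P + Q − PQ is the supremum of {P, Q} within the set of band projections; moreover I − P is a band projection satisfying P·(I−P) = 0 and P + (I−P) − P(I−P) = I. (Consequently the band projections on X form a Boolean algebra with smallest element 0, largest element I, lattice operations P ∧ Q = PQ and P ∨ Q = P + Q − PQ, and complement P^c = I − P.) -/

import Mathlib

open Pointwise

variable {X : Type*} [AddCommGroup X] [PartialOrder X] [IsOrderedAddMonoid X] [Module ℝ X]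
    [PosSMulStrictMono ℝ X]

/-- Two elements of an ordered vector space are disjoint if the sets `{x+y, -x-y}` and
`{x-y, y-x}` have the same set of upper bounds. -/
def UDisjoint (x y : X) : Prop :=
  upperBounds ({x + y, -x - y} : Set X) = upperBounds ({x - y, y - x} : Set X)

/-- The disjoint complement `S^⊥` of a set `S`. -/
def dComp (S : Set X) : Set X := {x : X | ∀ s ∈ S, UDisjoint x s}

/-- A band: a set equal to its double disjoint complement. -/
def IsBand (B : Set X) : Prop := B = dComp (dComp B)

/-- A projection band: a band `B` with `B ∩ B^⊥ = {0}` and `B + B^⊥ = X`. -/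
def IsProjBand (B : Set X) : Prop :=
  IsBand B ∧ B ∩ dComp B = {0} ∧ ∀ x : X, ∃ b ∈ B, ∃ c ∈ dComp B, x = b + c

/-- A positive linear operator. -/
def IsPosMap (T : X →ₗ[ℝ] X) : Prop := ∀ x : X, 0 ≤ x → 0 ≤ T x

/-- A band projection: a linear projection whose range is a projection band and whose
kernel is the disjoint complement of the range. -/
def IsBandProj (P : X →ₗ[ℝ] X) : Prop :=
  P ∘ₗ P = P ∧ IsProjBand (Set.range ⇑P) ∧ (LinearMap.ker P : Set X) = dComp (Set.range ⇑P)

/-- A pre-Riesz space: for every nonempty finite `A ⊆ X` and every `x`, if the upper bounds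
of `x + A` are contained in the upper bounds of `A`, then `x ≥ 0`. -/
def IsPreRiesz (X : Type*) [AddCommGroup X] [PartialOrder X] [IsOrderedAddMonoid X] [Module ℝ X]
    [PosSMulStrictMono ℝ X] : Prop :=
  ∀ (A : Set X) (x : X), A.Finite → A.Nonempty →
    upperBounds ((x + ·) '' A) ⊆ upperBounds A → 0 ≤ x

/- ### Auxiliary lemmas -/

lemma mem_ub_pair {a b w : X} : w ∈ upperBounds ({a, b} : Set X) ↔ a ≤ w ∧ b ≤ w := by
  constructor
  · intro h
    exact ⟨h (Set.mem_insert _ _), h (Set.mem_insert_of_mem _ rfl)⟩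
  · rintro ⟨h1, h2⟩ c hc
    rcases hc with rfl | hc
    · exact h1
    · rw [Set.mem_singleton_iff] at hc; subst hc; exact h2

lemma half_nonneg {a : X} (h : 0 ≤ a + a) : 0 ≤ a := by
  have h2 : (0:X) ≤ (2:ℝ) • a := by rwa [two_smul]
  have h3 : (0:X) ≤ (1/2 : ℝ) • ((2:ℝ) • a) := smul_nonneg (by norm_num) h2
  rwa [smul_smul, show (1/2 : ℝ) * 2 = 1 by norm_num, one_smul] at h3

lemma half_zero {a : X} (h1 : a + a ≤ 0) (h2 : 0 ≤ a + a) : a = 0 := by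
  have e : a + a = 0 := le_antisymm h1 h2
  have e2 : (2:ℝ) • a = 0 := by rwa [two_smul]
  have e3 := congrArg (fun z : X => (1/2:ℝ) • z) e2
  simpa [smul_smul, show (1/2:ℝ) * 2 = 1 by norm_num] using e3

lemma IsPosMap.mono {T : X →ₗ[ℝ] X} (hT : IsPosMap T) {a b : X} (h : a ≤ b) :
    T a ≤ T b := by
  have h' := hT (b - a) (sub_nonneg.mpr h)
  rw [map_sub] at h'
  exact sub_nonneg.mp h'

lemma UDisjoint.symm {x y : X} (h : UDisjoint x y) : UDisjoint y x := by
  unfold UDisjoint at *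
  have e1 : ({y + x, -y - x} : Set X) = {x + y, -x - y} := by
    rw [show y + x = x + y from add_comm _ _, show -y - x = -x - y from by abel]
  have e2 : ({x - y, y - x} : Set X) = {y - x, x - y} := Set.pair_comm _ _
  rw [e1, h, e2]

lemma UDisjoint.self_eq_zero {x : X} (h : UDisjoint x x) : x = 0 := by
  unfold UDisjoint at h
  have h0 : (0:X) ∈ upperBounds ({x - x, x - x} : Set X) := by
    rw [mem_ub_pair]; constructor <;> simp
  rw [← h, mem_ub_pair] at h0
  refine half_zero h0.1 ?_
  have h2 := h0.2
  rw [show -x - x = -(x + x) from by abel] at h2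
  exact neg_nonpos.mp h2

lemma zero_udisjoint (s : X) : UDisjoint (0:X) s := by
  unfold UDisjoint
  have e1 : ({(0:X) + s, -0 - s} : Set X) = {s, -s} := by norm_num
  have e2 : ({(0:X) - s, s - 0} : Set X) = {-s, s} := by norm_num
  rw [e1, e2, Set.pair_comm]

/-- component-combination helper -/
lemma proj_ub_trans {π : X →ₗ[ℝ] X} (hpos : IsPosMap π)
    (hpos' : IsPosMap ((LinearMap.id : X →ₗ[ℝ] X) - π)) {w a b : X} (ha : a ≤ w) (hb : b ≤ w) :
    π a + (b - π b) ≤ w := by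
  have h1 : π a ≤ π w := hpos.mono ha
  have h2 : ((LinearMap.id : X →ₗ[ℝ] X) - π) b ≤ ((LinearMap.id : X →ₗ[ℝ] X) - π) w := hpos'.mono hb
  have e : ((LinearMap.id : X →ₗ[ℝ] X) - π) b = b - π b := by simp [LinearMap.sub_apply]
  have e' : ((LinearMap.id : X →ₗ[ℝ] X) - π) w = w - π w := by simp [LinearMap.sub_apply]
  rw [e, e'] at h2
  calc π a + (b - π b) ≤ π w + (w - π w) := add_le_add h1 h2
  _ = w := by abel

/-- The key splitting lemma: an element of the kernel of a positive idempotent with positive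
complement is disjoint from every fixed point. -/
lemma ker_udisjoint_range {π : X →ₗ[ℝ] X} (hpos : IsPosMap π)
    (hpos' : IsPosMap ((LinearMap.id : X →ₗ[ℝ] X) - π))
    {x t : X} (hx : π x = 0) (ht : π t = t) : UDisjoint x t := by
  have eA : π (-x - t) = -t := by
    rw [show -x - t = -(x + t) from by abel, map_neg, map_add, hx, ht, zero_add]
  have eB : π (x + t) = t := by rw [map_add, hx, ht, zero_add]
  have eC : π (x - t) = -t := by rw [map_sub, hx, ht, zero_sub]
  have eD : π (t - x) = t := by rw [map_sub, hx, ht, sub_zero]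
  unfold UDisjoint
  ext w
  rw [mem_ub_pair, mem_ub_pair]
  constructor
  · rintro ⟨h1, h2⟩
    constructor
    · have h3 := proj_ub_trans hpos hpos' h2 h1
      rw [eA, eB] at h3
      calc x - t = -t + (x + t - t) := by abel
      _ ≤ w := h3
    · have h3 := proj_ub_trans hpos hpos' h1 h2
      rw [eA, eB] at h3
      calc t - x = t + (-x - t - -t) := by abel
      _ ≤ w := h3
  · rintro ⟨h1, h2⟩
    constructor
    · have h3 := proj_ub_trans hpos hpos' h2 h1
      rw [eC, eD] at h3
      calc x + t = t + (x - t - -t) := by abel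
      _ ≤ w := h3
    · have h3 := proj_ub_trans hpos hpos' h1 h2
      rw [eC, eD] at h3
      calc -x - t = -t + (t - x - t) := by abel
      _ ≤ w := h3

/-- If `x` is disjoint from `π x` then `π x = 0` (needs directedness). -/
lemma udisjoint_self_proj_zero {π : X →ₗ[ℝ] X} (hidem : π ∘ₗ π = π)
    (hpos : IsPosMap π) (hpos' : IsPosMap ((LinearMap.id : X →ₗ[ℝ] X) - π))
    (hdir : ∀ a b : X, ∃ u, a ≤ u ∧ b ≤ u)
    {x : X} (h : UDisjoint x (π x)) : π x = 0 := by
  have hfix : ∀ y, π (π y) = π y := fun y => by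
    have h' := LinearMap.ext_iff.mp hidem y; simpa using h'
  obtain ⟨u, hu1, hu2⟩ := hdir (x - π x) (π x - x)
  have eπ1 : π (x - π x) = 0 := by rw [map_sub, hfix, sub_self]
  have eπ2 : π (π x - x) = 0 := by rw [map_sub, hfix, sub_self]
  have e1 : ((LinearMap.id : X →ₗ[ℝ] X) - π) (x - π x) = x - π x := by
    simp [LinearMap.sub_apply, eπ1]
  have e2 : ((LinearMap.id : X →ₗ[ℝ] X) - π) (π x - x) = π x - x := by
    simp [LinearMap.sub_apply, eπ2]
  have eu : ((LinearMap.id : X →ₗ[ℝ] X) - π) u = u - π u := by simp [LinearMap.sub_apply]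
  have hw1 : x - π x ≤ u - π u := by
    have h' := hpos'.mono hu1; rwa [e1, eu] at h'
  have hw2 : π x - x ≤ u - π u := by
    have h' := hpos'.mono hu2; rwa [e2, eu] at h'
  have hw : u - π u ∈ upperBounds ({x - π x, π x - x} : Set X) := mem_ub_pair.mpr ⟨hw1, hw2⟩
  unfold UDisjoint at h
  rw [← h, mem_ub_pair] at hw
  obtain ⟨hA, hB⟩ := hw
  have hπA := hpos.mono hA
  have hπB := hpos.mono hB
  have eS : π (x + π x) = π x + π x := by rw [map_add, hfix]
  have eS' : π (-x - π x) = -(π x + π x) := by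
    rw [show -x - π x = -(x + π x) from by abel, map_neg, eS]
  have eK : π (u - π u) = 0 := by rw [map_sub, hfix, sub_self]
  rw [eS, eK] at hπA
  rw [eS', eK] at hπB
  exact half_zero hπA (neg_nonpos.mp hπB)

/-- Pre-Riesz spaces (as defined above) are directed. -/
lemma IsPreRiesz.directed (hX : IsPreRiesz X) (a b : X) : ∃ u, a ≤ u ∧ b ≤ u := by
  by_contra hcon
  push_neg at hcon
  have hub : upperBounds ({a, b} : Set X) = ∅ := by
    ext w
    simp only [Set.mem_empty_iff_false, iff_false]
    intro hw
    rw [mem_ub_pair] at hw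
    exact hcon w hw.1 hw.2
  have hall : ∀ x : X, 0 ≤ x := by
    intro x
    refine hX {a, b} x ((Set.finite_singleton b).insert a) ⟨a, Set.mem_insert _ _⟩ ?_
    intro w hw
    exfalso
    have hmem : (w - x) ∈ upperBounds ({a, b} : Set X) := by
      intro c hc
      have h1 : x + c ∈ (x + ·) '' ({a, b} : Set X) := ⟨c, hc, rfl⟩
      have h2 := hw h1
      exact le_sub_iff_add_le.mpr (by rwa [add_comm] at h2)
    rw [hub] at hmem
    exact hmem
  have hzero : ∀ x : X, x = 0 := fun x =>
    le_antisymm (neg_nonneg.mp (hall (-x))) (hall x)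
  exact hcon 0 (le_of_eq (hzero a)) (le_of_eq (hzero b))

/-- Every band projection is positive with positive complement. -/
lemma IsBandProj.posmaps {P : X →ₗ[ℝ] X} (hP : IsBandProj P) :
    IsPosMap P ∧ IsPosMap ((LinearMap.id : X →ₗ[ℝ] X) - P) := by
  have hfix : ∀ y, P (P y) = P y := fun y => by
    have h' := LinearMap.ext_iff.mp hP.1 y; simpa using h'
  have key : ∀ x : X, 0 ≤ x → 0 ≤ P x ∧ P x ≤ x := by
    intro x hx
    have hker : P (x - P x) = 0 := by rw [map_sub, hfix, sub_self]
    have hmem : (x - P x) ∈ dComp (Set.range ⇑P) := by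
      rw [← hP.2.2]
      exact LinearMap.mem_ker.mpr hker
    have hud : UDisjoint (x - P x) (P x) := hmem (P x) ⟨x, rfl⟩
    unfold UDisjoint at hud
    have hxmem : x ∈ upperBounds ({(x - P x) + P x, -(x - P x) - P x} : Set X) := by
      rw [mem_ub_pair]
      constructor
      · exact le_of_eq (by abel)
      · calc -(x - P x) - P x = -x := by abel
        _ ≤ x := neg_le_self hx
    rw [hud, mem_ub_pair] at hxmem
    obtain ⟨h1, h2⟩ := hxmem
    constructor
    · refine half_nonneg ?_
      have h3 := sub_nonneg.mpr h1
      rwa [show x - ((x - P x) - P x) = P x + P x from by abel] at h3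
    · refine sub_nonneg.mp (half_nonneg ?_)
      have h3 := sub_nonneg.mpr h2
      rwa [show x - (P x - (x - P x)) = (x - P x) + (x - P x) from by abel] at h3
  refine ⟨fun x hx => (key x hx).1, fun x hx => ?_⟩
  have h' := (key x hx).2
  have e : ((LinearMap.id : X →ₗ[ℝ] X) - P) x = x - P x := by simp [LinearMap.sub_apply]
  rw [e]
  exact sub_nonneg.mpr h'

/-- A positive idempotent with positive complement on a pre-Riesz space is a band
projection. -/
lemma nice_isBandProj (hX : IsPreRiesz X) {π : X →ₗ[ℝ] X} (hidem : π ∘ₗ π = π)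
    (hpos : IsPosMap π) (hpos' : IsPosMap ((LinearMap.id : X →ₗ[ℝ] X) - π)) : IsBandProj π := by
  have hdir : ∀ a b : X, ∃ u, a ≤ u ∧ b ≤ u := fun a b => hX.directed a b
  have hfix : ∀ y, π (π y) = π y := fun y => by
    have h' := LinearMap.ext_iff.mp hidem y; simpa using h'
  have hkerset : (LinearMap.ker π : Set X) = dComp (Set.range ⇑π) := by
    ext x
    simp only [SetLike.mem_coe, LinearMap.mem_ker]
    constructor
    · intro hx s hs
      obtain ⟨y, rfl⟩ := hs
      exact ker_udisjoint_range hpos hpos' hx (hfix y)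
    · intro hx
      exact udisjoint_self_proj_zero hidem hpos hpos' hdir (hx (π x) ⟨x, rfl⟩)
  have hcidem : ((LinearMap.id : X →ₗ[ℝ] X) - π) ∘ₗ ((LinearMap.id : X →ₗ[ℝ] X) - π) = ((LinearMap.id : X →ₗ[ℝ] X) - π) := by
    ext y
    simp only [LinearMap.comp_apply, LinearMap.sub_apply, LinearMap.id_apply, map_sub, hfix y]
    abel
  have hcpos' : IsPosMap ((LinearMap.id : X →ₗ[ℝ] X) - ((LinearMap.id : X →ₗ[ℝ] X) - π)) := by
    have e : (LinearMap.id : X →ₗ[ℝ] X) - ((LinearMap.id : X →ₗ[ℝ] X) - π) = π := by ext y; simp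
    rw [e]; exact hpos
  have hcfix : ∀ y, ((LinearMap.id : X →ₗ[ℝ] X) - π) (((LinearMap.id : X →ₗ[ℝ] X) - π) y) = ((LinearMap.id : X →ₗ[ℝ] X) - π) y :=
    fun y => by have h' := LinearMap.ext_iff.mp hcidem y; simpa using h'
  have hkerset' : (LinearMap.ker ((LinearMap.id : X →ₗ[ℝ] X) - π) : Set X)
      = dComp (Set.range ⇑((LinearMap.id : X →ₗ[ℝ] X) - π)) := by
    ext x
    simp only [SetLike.mem_coe, LinearMap.mem_ker]
    constructor
    · intro hx s hs
      obtain ⟨y, rfl⟩ := hs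
      exact ker_udisjoint_range hpos' hcpos' hx (hcfix y)
    · intro hx
      exact udisjoint_self_proj_zero hcidem hpos' hcpos' hdir
        (hx (((LinearMap.id : X →ₗ[ℝ] X) - π) x) ⟨x, rfl⟩)
  have hrange : Set.range ⇑π = (LinearMap.ker ((LinearMap.id : X →ₗ[ℝ] X) - π) : Set X) := by
    ext y
    simp only [SetLike.mem_coe, LinearMap.mem_ker, Set.mem_range, LinearMap.sub_apply,
      LinearMap.id_apply]
    constructor
    · rintro ⟨x, rfl⟩; rw [hfix x]; exact sub_self _
    · intro hy; exact ⟨y, (sub_eq_zero.mp hy).symm⟩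
  have hrange' : Set.range ⇑((LinearMap.id : X →ₗ[ℝ] X) - π) = (LinearMap.ker π : Set X) := by
    ext y
    simp only [SetLike.mem_coe, LinearMap.mem_ker, Set.mem_range, LinearMap.sub_apply,
      LinearMap.id_apply]
    constructor
    · rintro ⟨x, rfl⟩; rw [map_sub, hfix x, sub_self]
    · intro hy; exact ⟨y, by rw [hy, sub_zero]⟩
  refine ⟨hidem, ⟨?_, ?_, ?_⟩, hkerset⟩
  · show Set.range ⇑π = dComp (dComp (Set.range ⇑π))
    calc Set.range ⇑π = (LinearMap.ker ((LinearMap.id : X →ₗ[ℝ] X) - π) : Set X) := hrange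
      _ = dComp (Set.range ⇑((LinearMap.id : X →ₗ[ℝ] X) - π)) := hkerset'
      _ = dComp ((LinearMap.ker π : Set X)) := by rw [hrange']
      _ = dComp (dComp (Set.range ⇑π)) := by rw [hkerset]
  · ext t
    simp only [Set.mem_inter_iff, Set.mem_singleton_iff]
    constructor
    · rintro ⟨hr, hd⟩
      exact (hd t hr).self_eq_zero
    · rintro rfl
      exact ⟨⟨0, map_zero π⟩, fun s _ => zero_udisjoint s⟩
  · intro x
    refine ⟨π x, ⟨x, rfl⟩, x - π x, ?_, by abel⟩
    rw [← hkerset]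
    exact LinearMap.mem_ker.mpr (by rw [map_sub, hfix x, sub_self])

lemma bandproj_comm_aux {P Q : X →ₗ[ℝ] X} (hP : IsBandProj P) (hQ : IsBandProj Q)
    {x : X} (hx : 0 ≤ x) : P (Q x) ≤ Q (P x) := by
  obtain ⟨hPp, hPn⟩ := hP.posmaps
  obtain ⟨hQp, hQn⟩ := hQ.posmaps
  have hQfix : ∀ y, Q (Q y) = Q y := fun y => by
    have h' := LinearMap.ext_iff.mp hQ.1 y; simpa using h'
  have hle : ∀ (T : X →ₗ[ℝ] X), IsPosMap ((LinearMap.id : X →ₗ[ℝ] X) - T) → ∀ y : X, 0 ≤ y → T y ≤ y := by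
    intro T hT y hy
    have h' := hT y hy
    have e : ((LinearMap.id : X →ₗ[ℝ] X) - T) y = y - T y := by simp [LinearMap.sub_apply]
    rw [e] at h'
    exact sub_nonneg.mp h'
  have hQx0 : 0 ≤ Q x := hQp x hx
  have hQxle : Q x ≤ x := hle Q hQn x hx
  have hPQx0 : 0 ≤ P (Q x) := hPp _ hQx0
  have hPQle' : P (Q x) ≤ Q x := hle P hPn _ hQx0
  have hfixPQ : Q (P (Q x)) = P (Q x) := by
    have hA : 0 ≤ P (Q x) - Q (P (Q x)) := by
      have h' := hQn _ hPQx0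
      have e : ((LinearMap.id : X →ₗ[ℝ] X) - Q) (P (Q x)) = P (Q x) - Q (P (Q x)) := by
        simp [LinearMap.sub_apply]
      rwa [e] at h'
    have hB : P (Q x) - Q (P (Q x)) ≤ 0 := by
      have h' := hQn.mono hPQle'
      have e1 : ((LinearMap.id : X →ₗ[ℝ] X) - Q) (P (Q x)) = P (Q x) - Q (P (Q x)) := by
        simp [LinearMap.sub_apply]
      have e2 : ((LinearMap.id : X →ₗ[ℝ] X) - Q) (Q x) = 0 := by
        simp [LinearMap.sub_apply, hQfix x]
      rw [e1, e2] at h'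
      exact h'
    have h0 : P (Q x) - Q (P (Q x)) = 0 := le_antisymm hB hA
    exact (sub_eq_zero.mp h0).symm
  calc P (Q x) = Q (P (Q x)) := hfixPQ.symm
  _ ≤ Q (P x) := hQp.mono (hPp.mono hQxle)

lemma bandproj_comm (hX : IsPreRiesz X) {P Q : X →ₗ[ℝ] X} (hP : IsBandProj P)
    (hQ : IsBandProj Q) (x : X) : P (Q x) = Q (P x) := by
  have key : ∀ y : X, 0 ≤ y → P (Q y) = Q (P y) := fun y hy =>
    le_antisymm (bandproj_comm_aux hP hQ hy) (bandproj_comm_aux hQ hP hy)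
  obtain ⟨u, hu1, hu2⟩ := hX.directed x 0
  have hu0 : 0 ≤ u := hu2
  have hux : 0 ≤ u - x := sub_nonneg.mpr hu1
  have ex : Q x = Q u - Q (u - x) := by
    rw [← map_sub]; congr 1; abel
  have ex' : P x = P u - P (u - x) := by
    rw [← map_sub]; congr 1; abel
  calc P (Q x) = P (Q u) - P (Q (u - x)) := by rw [ex, map_sub]
  _ = Q (P u) - Q (P (u - x)) := by rw [key u hu0, key _ hux]
  _ = Q (P x) := by rw [← map_sub, ← map_sub, show u - (u - x) = x from by abel]

/-- The composition of two band projections is a band projection. -/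
lemma isBandProj_comp (hX : IsPreRiesz X) {P Q : X →ₗ[ℝ] X} (hP : IsBandProj P)
    (hQ : IsBandProj Q) : IsBandProj (P ∘ₗ Q) := by
  obtain ⟨hPp, hPn⟩ := hP.posmaps
  obtain ⟨hQp, hQn⟩ := hQ.posmaps
  have hPfix : ∀ y, P (P y) = P y := fun y => by
    have h' := LinearMap.ext_iff.mp hP.1 y; simpa using h'
  have hQfix : ∀ y, Q (Q y) = Q y := fun y => by
    have h' := LinearMap.ext_iff.mp hQ.1 y; simpa using h'
  have hcomm := bandproj_comm hX hP hQ
  have hidem : (P ∘ₗ Q) ∘ₗ (P ∘ₗ Q) = P ∘ₗ Q := by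
    ext x
    simp only [LinearMap.comp_apply]
    rw [← hcomm (Q x), hQfix x, hPfix (Q x)]
  have hpos : IsPosMap (P ∘ₗ Q) := fun x hx => hPp _ (hQp _ hx)
  have hpos' : IsPosMap ((LinearMap.id : X →ₗ[ℝ] X) - P ∘ₗ Q) := by
    intro x hx
    have h1 : 0 ≤ x - P x := by
      have h' := hPn x hx
      have e : ((LinearMap.id : X →ₗ[ℝ] X) - P) x = x - P x := by simp [LinearMap.sub_apply]
      rwa [e] at h'
    have h2 : 0 ≤ P x - P (Q x) := by
      have hQle : Q x ≤ x := by
        have h' := hQn x hx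
        have e : ((LinearMap.id : X →ₗ[ℝ] X) - Q) x = x - Q x := by simp [LinearMap.sub_apply]
        rw [e] at h'
        exact sub_nonneg.mp h'
      exact sub_nonneg.mpr (hPp.mono hQle)
    have h3 := add_nonneg h1 h2
    rw [show (x - P x) + (P x - P (Q x)) = x - P (Q x) from by abel] at h3
    have e : ((LinearMap.id : X →ₗ[ℝ] X) - P ∘ₗ Q) x = x - P (Q x) := by
      simp [LinearMap.sub_apply, LinearMap.comp_apply]
    rw [e]
    exact h3
  exact nice_isBandProj hX hidem hpos hpos'

/-- The complement of a band projection is a band projection. -/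
lemma isBandProj_compl (hX : IsPreRiesz X) {P : X →ₗ[ℝ] X} (hP : IsBandProj P) :
    IsBandProj ((LinearMap.id : X →ₗ[ℝ] X) - P) := by
  obtain ⟨hPp, hPn⟩ := hP.posmaps
  have hPfix : ∀ y, P (P y) = P y := fun y => by
    have h' := LinearMap.ext_iff.mp hP.1 y; simpa using h'
  have hidem : ((LinearMap.id : X →ₗ[ℝ] X) - P) ∘ₗ ((LinearMap.id : X →ₗ[ℝ] X) - P) = (LinearMap.id : X →ₗ[ℝ] X) - P := by
    ext y
    simp only [LinearMap.comp_apply, LinearMap.sub_apply, LinearMap.id_apply, map_sub, hPfix y]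
    abel
  have hpos' : IsPosMap ((LinearMap.id : X →ₗ[ℝ] X) - ((LinearMap.id : X →ₗ[ℝ] X) - P)) := by
    have e : (LinearMap.id : X →ₗ[ℝ] X) - ((LinearMap.id : X →ₗ[ℝ] X) - P) = P := by ext y; simp
    rw [e]; exact hPp
  exact nice_isBandProj hX hidem hPn hpos'

/-- The infimum property of the composition. -/
lemma le_comp {P Q R : X →ₗ[ℝ] X} (hP : IsBandProj P) (hR : IsBandProj R)
    (hRP : IsPosMap (P - R)) (hRQ : IsPosMap (Q - R)) : IsPosMap (P ∘ₗ Q - R) := by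
  obtain ⟨hPp, hPn⟩ := hP.posmaps
  obtain ⟨hRp, hRn⟩ := hR.posmaps
  have hRfix : ∀ y, R (R y) = R y := fun y => by
    have h' := LinearMap.ext_iff.mp hR.1 y; simpa using h'
  intro x hx
  have hRx0 : 0 ≤ R x := hRp x hx
  have hRxQ : R x ≤ Q x := by
    have h' := hRQ x hx
    have e : (Q - R) x = Q x - R x := by simp [LinearMap.sub_apply]
    rw [e] at h'
    exact sub_nonneg.mp h'
  have h1 : R x ≤ P (R x) := by
    have h' := hRP (R x) hRx0
    have e : (P - R) (R x) = P (R x) - R x := by simp [LinearMap.sub_apply, hRfix x]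
    rw [e] at h'
    exact sub_nonneg.mp h'
  have h2 : P (R x) ≤ R x := by
    have h' := hPn (R x) hRx0
    have e : ((LinearMap.id : X →ₗ[ℝ] X) - P) (R x) = R x - P (R x) := by simp [LinearMap.sub_apply]
    rw [e] at h'
    exact sub_nonneg.mp h'
  have hfixR : P (R x) = R x := le_antisymm h2 h1
  have h3 : R x ≤ P (Q x) := hfixR ▸ hPp.mono hRxQ
  have e : (P ∘ₗ Q - R) x = P (Q x) - R x := by
    simp [LinearMap.sub_apply, LinearMap.comp_apply]
  rw [e]
  exact sub_nonneg.mpr h3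

/-- The band projections on `X` form a Boolean algebra: `PQ` is the infimum and
`P + Q - PQ` the supremum of `{P, Q}` among band projections, and `I - P` is a band
projection complementary to `P`. -/
theorem stmt_7 (hX : IsPreRiesz X) (P Q : X →ₗ[ℝ] X)
    (hP : IsBandProj P) (hQ : IsBandProj Q) :
    IsBandProj (P ∘ₗ Q) ∧
    IsPosMap (P - P ∘ₗ Q) ∧ IsPosMap (Q - P ∘ₗ Q) ∧
    (∀ R : X →ₗ[ℝ] X, IsBandProj R → IsPosMap (P - R) → IsPosMap (Q - R) →
      IsPosMap (P ∘ₗ Q - R)) ∧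
    IsBandProj (P + Q - P ∘ₗ Q) ∧
    IsPosMap (P + Q - P ∘ₗ Q - P) ∧ IsPosMap (P + Q - P ∘ₗ Q - Q) ∧
    (∀ R : X →ₗ[ℝ] X, IsBandProj R → IsPosMap (R - P) → IsPosMap (R - Q) →
      IsPosMap (R - (P + Q - P ∘ₗ Q))) ∧
    IsBandProj ((LinearMap.id : X →ₗ[ℝ] X) - P) ∧
    P ∘ₗ ((LinearMap.id : X →ₗ[ℝ] X) - P) = 0 ∧
    P + ((LinearMap.id : X →ₗ[ℝ] X) - P) - P ∘ₗ ((LinearMap.id : X →ₗ[ℝ] X) - P)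
      = (LinearMap.id : X →ₗ[ℝ] X) := by
  obtain ⟨hPp, hPn⟩ := hP.posmaps
  obtain ⟨hQp, hQn⟩ := hQ.posmaps
  have hPfix : ∀ y, P (P y) = P y := fun y => by
    have h' := LinearMap.ext_iff.mp hP.1 y; simpa using h'
  have hPQ : IsBandProj (P ∘ₗ Q) := isBandProj_comp hX hP hQ
  have hcP : IsBandProj ((LinearMap.id : X →ₗ[ℝ] X) - P) := isBandProj_compl hX hP
  have hcQ : IsBandProj ((LinearMap.id : X →ₗ[ℝ] X) - Q) := isBandProj_compl hX hQ
  have hbc : IsPosMap (P - P ∘ₗ Q) := by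
    intro x hx
    have h0 : 0 ≤ ((LinearMap.id : X →ₗ[ℝ] X) - Q) x := hQn x hx
    have h1 := hPp _ h0
    have e : (P - P ∘ₗ Q) x = P (((LinearMap.id : X →ₗ[ℝ] X) - Q) x) := by
      simp [LinearMap.sub_apply, LinearMap.comp_apply, map_sub]
    rw [e]
    exact h1
  have hbc2 : IsPosMap (Q - P ∘ₗ Q) := by
    intro x hx
    have h0 : 0 ≤ Q x := hQp x hx
    have h1 := hPn _ h0
    have e : (Q - P ∘ₗ Q) x = ((LinearMap.id : X →ₗ[ℝ] X) - P) (Q x) := by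
      simp [LinearMap.sub_apply, LinearMap.comp_apply]
    rw [e]
    exact h1
  have hinf : ∀ R : X →ₗ[ℝ] X, IsBandProj R → IsPosMap (P - R) → IsPosMap (Q - R) →
      IsPosMap (P ∘ₗ Q - R) := fun R hR h1 h2 => le_comp hP hR h1 h2
  have hPQ' : IsBandProj (((LinearMap.id : X →ₗ[ℝ] X) - P) ∘ₗ ((LinearMap.id : X →ₗ[ℝ] X) - Q)) :=
    isBandProj_comp hX hcP hcQ
  have hsupeq : (LinearMap.id : X →ₗ[ℝ] X) - ((LinearMap.id : X →ₗ[ℝ] X) - P) ∘ₗ ((LinearMap.id : X →ₗ[ℝ] X) - Q)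
      = P + Q - P ∘ₗ Q := by
    ext x
    simp only [LinearMap.sub_apply, LinearMap.comp_apply, LinearMap.id_apply,
      LinearMap.add_apply, map_sub]
    abel
  have hsup : IsBandProj (P + Q - P ∘ₗ Q) := by
    rw [← hsupeq]; exact isBandProj_compl hX hPQ'
  have hf : IsPosMap (P + Q - P ∘ₗ Q - P) := by
    have e : P + Q - P ∘ₗ Q - P = Q - P ∘ₗ Q := by abel
    rw [e]; exact hbc2
  have hg : IsPosMap (P + Q - P ∘ₗ Q - Q) := by
    have e : P + Q - P ∘ₗ Q - Q = P - P ∘ₗ Q := by abel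
    rw [e]; exact hbc
  have hsupuniv : ∀ R : X →ₗ[ℝ] X, IsBandProj R → IsPosMap (R - P) → IsPosMap (R - Q) →
      IsPosMap (R - (P + Q - P ∘ₗ Q)) := by
    intro R hR h1 h2
    have hcR : IsBandProj ((LinearMap.id : X →ₗ[ℝ] X) - R) := isBandProj_compl hX hR
    have h1' : IsPosMap (((LinearMap.id : X →ₗ[ℝ] X) - P) - ((LinearMap.id : X →ₗ[ℝ] X) - R)) := by
      have e : ((LinearMap.id : X →ₗ[ℝ] X) - P) - ((LinearMap.id : X →ₗ[ℝ] X) - R) = R - P := by abel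
      rw [e]; exact h1
    have h2' : IsPosMap (((LinearMap.id : X →ₗ[ℝ] X) - Q) - ((LinearMap.id : X →ₗ[ℝ] X) - R)) := by
      have e : ((LinearMap.id : X →ₗ[ℝ] X) - Q) - ((LinearMap.id : X →ₗ[ℝ] X) - R) = R - Q := by abel
      rw [e]; exact h2
    have h3 := le_comp hcP hcR h1' h2'
    have e : ((LinearMap.id : X →ₗ[ℝ] X) - P) ∘ₗ ((LinearMap.id : X →ₗ[ℝ] X) - Q) - ((LinearMap.id : X →ₗ[ℝ] X) - R)
        = R - (P + Q - P ∘ₗ Q) := by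
      ext x
      simp only [LinearMap.sub_apply, LinearMap.comp_apply, LinearMap.id_apply,
        LinearMap.add_apply, map_sub]
      abel
    rw [e] at h3
    exact h3
  have hj : P ∘ₗ ((LinearMap.id : X →ₗ[ℝ] X) - P) = 0 := by
    ext x
    simp only [LinearMap.comp_apply, LinearMap.sub_apply, LinearMap.id_apply,
      LinearMap.zero_apply]
    rw [map_sub, hPfix x, sub_self]
  have hk : P + ((LinearMap.id : X →ₗ[ℝ] X) - P)
      - P ∘ₗ ((LinearMap.id : X →ₗ[ℝ] X) - P) = (LinearMap.id : X →ₗ[ℝ] X) := by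
    rw [hj, sub_zero]
    abel
  exact ⟨hPQ, hbc, hbc2, hinf, hsup, hf, hg, hsupuniv, hcP, hj, hk⟩
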